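/- The convolution of two log-concave, nonnegative, integrable functions on ℝ is log-concave. -/

import Mathlib

open MeasureTheory Set Pointwise
open scoped ENNReal NNReal

section
variable {f : ℝ → ℝ}

/-- notation for the log-concavity hypothesis -/
def LCH (f : ℝ → ℝ) : Prop :=
  ∀ x y : ℝ, ∀ t ∈ Set.Icc (0:ℝ) 1, f x ^ t * f y ^ (1 - t) ≤ f (t * x + (1 - t) * y)

lemma lch_min (hf0 : ∀ x, 0 ≤ f x) (hf : LCH f) (x y : ℝ) {t : ℝ} (ht : t ∈ Set.Icc (0:ℝ) 1) :
    min (f x) (f y) ≤ f (t * x + (1 - t) * y) := by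
  rcases le_or_gt (min (f x) (f y)) 0 with h | h
  · exact h.trans (hf0 _)
  · have hx : min (f x) (f y) ≤ f x := min_le_left _ _
    have hy : min (f x) (f y) ≤ f y := min_le_right _ _
    calc min (f x) (f y) = min (f x) (f y) ^ t * min (f x) (f y) ^ (1 - t) := by
          rw [← Real.rpow_add h, add_sub_cancel, Real.rpow_one]
      _ ≤ f x ^ t * f y ^ (1 - t) := by
          apply mul_le_mul (Real.rpow_le_rpow h.le hx ht.1) (Real.rpow_le_rpow h.le hy (by linarith [ht.2]))
            (Real.rpow_nonneg h.le _) (Real.rpow_nonneg (hf0 x) _)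
      _ ≤ _ := hf x y t ht

lemma lch_convex_level (hf0 : ∀ x, 0 ≤ f x) (hf : LCH f) (u : ℝ) :
    Convex ℝ {v : ℝ | u < f v} := by
  intro p hp q hq a b ha hb hab
  have := lch_min hf0 hf p q (t := a) ⟨ha, by linarith⟩
  have hb' : b = 1 - a := by linarith
  simp only [Set.mem_setOf_eq] at hp hq ⊢
  have : min (f p) (f q) ≤ f (a * p + (1-a) * q) := this
  calc u < min (f p) (f q) := lt_min hp hq
    _ ≤ f (a * p + (1 - a) * q) := this
    _ = f (a • p + b • q) := by rw [hb']; norm_num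

lemma lch_measurable (hf0 : ∀ x, 0 ≤ f x) (hf : LCH f) : Measurable f := by
  apply measurable_of_Ioi
  intro u
  have : f ⁻¹' Set.Ioi u = {v : ℝ | u < f v} := rfl
  rw [this]
  exact ((lch_convex_level hf0 hf u).ordConnected).measurableSet

end

lemma int_lower {f : ℝ → ℝ} (hfi : Integrable f) (hf0 : ∀ x, 0 ≤ f x)
    {L u v : ℝ} (huv : u ≤ v) (h : ∀ y ∈ Set.Icc u v, L ≤ f y) :
    L * (v - u) ≤ ∫ x, f x := by
  calc L * (v - u) = ∫ _ in Set.Icc u v, L := by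
        rw [setIntegral_const, measureReal_def, Real.volume_Icc, ENNReal.toReal_ofReal (by linarith)]
        simp [smul_eq_mul]; ring
    _ ≤ ∫ y in Set.Icc u v, f y := by
        apply setIntegral_mono_on (integrableOn_const (by
          rw [Real.volume_Icc]; exact ENNReal.ofReal_ne_top)) hfi.integrableOn
          measurableSet_Icc
        exact fun y hy => h y hy
    _ ≤ ∫ x, f x := setIntegral_le_integral hfi (Filter.Eventually.of_forall hf0)

lemma half_bound {f : ℝ → ℝ} (hf0 : ∀ x, 0 ≤ f x) (hfi : Integrable f) (hf : LCH f)
    {a b : ℝ} (hab : a < b) (hfa : 0 < f a) (hfb : 0 < f b)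
    {x : ℝ} (hx : x ≤ (a + b) / 2) (hx1 : 1 < f x) :
    f x ≤ (4 * (∫ v, f v) / ((b - a) * min (min (f a) (f b)) 1)) ^ (2:ℝ) := by
  set m₁ : ℝ := min (min (f a) (f b)) 1 with hm₁def
  have hm₁ : 0 < m₁ := lt_min (lt_min hfa hfb) one_pos
  have hm₁1 : m₁ ≤ 1 := min_le_right _ _
  set I : ℝ := ∫ v, f v with hIdef
  have hxb : x < b := by linarith
  set c : ℝ := (x + b) / 2 with hcdef
  have key : ∀ y ∈ Set.Icc x c, f x ^ (2⁻¹:ℝ) * m₁ ≤ f y := by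
    intro y hy
    obtain ⟨hy1, hy2⟩ := hy
    set s : ℝ := (b - y) / (b - x) with hsdef
    have hbx : (0:ℝ) < b - x := by linarith
    have hs1 : s ≤ 1 := by rw [hsdef, div_le_one hbx]; linarith
    have hs2 : (2⁻¹:ℝ) ≤ s := by
      rw [hsdef, le_div_iff₀ hbx]
      rw [hcdef] at hy2; linarith
    have hs0 : (0:ℝ) ≤ s := by linarith
    have hyeq : y = s * x + (1 - s) * b := by
      rw [hsdef]; field_simp; ring
    have h1 : f x ^ s * f b ^ (1 - s) ≤ f y := by
      rw [hyeq]; exact hf x b s ⟨hs0, hs1⟩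
    have h2 : f x ^ (2⁻¹:ℝ) ≤ f x ^ s :=
      Real.rpow_le_rpow_of_exponent_le hx1.le hs2
    have h3 : m₁ ≤ f b ^ (1 - s) := by
      rcases le_or_gt 1 (f b) with hb1 | hb1
      · exact hm₁1.trans (Real.one_le_rpow hb1 (by linarith))
      · calc m₁ ≤ f b := (min_le_left _ _).trans (min_le_right _ _)
          _ = f b ^ (1:ℝ) := (Real.rpow_one _).symm
          _ ≤ f b ^ (1 - s) := Real.rpow_le_rpow_of_exponent_ge hfb hb1.le (by linarith)
    calc f x ^ (2⁻¹:ℝ) * m₁ ≤ f x ^ s * f b ^ (1 - s) :=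
          mul_le_mul h2 h3 hm₁.le (Real.rpow_nonneg (hf0 x) _)
      _ ≤ f y := h1
  have hxc : x ≤ c := by rw [hcdef]; linarith
  have hL0 : 0 ≤ f x ^ (2⁻¹:ℝ) * m₁ := mul_nonneg (Real.rpow_nonneg (hf0 x) _) hm₁.le
  have hint : f x ^ (2⁻¹:ℝ) * m₁ * (c - x) ≤ I := int_lower hfi hf0 hxc key
  have hcx : c - x = (b - x) / 2 := by rw [hcdef]; ring
  have hlen : (b - a) / 4 ≤ c - x := by rw [hcx]; linarith
  have hstep : f x ^ (2⁻¹:ℝ) * ((b - a) * m₁) ≤ 4 * I := by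
    nlinarith [mul_le_mul_of_nonneg_left hlen hL0]
  have hK : f x ^ (2⁻¹:ℝ) ≤ 4 * I / ((b - a) * m₁) := by
    rw [le_div_iff₀ (mul_pos (by linarith) hm₁)]
    linarith
  calc f x = (f x ^ (2⁻¹:ℝ)) ^ (2:ℝ) := by
        rw [← Real.rpow_mul (hf0 x)]; norm_num
    _ ≤ (4 * I / ((b - a) * m₁)) ^ (2:ℝ) :=
        Real.rpow_le_rpow (Real.rpow_nonneg (hf0 x) _) hK (by norm_num)

lemma lch_bounded {f : ℝ → ℝ} (hf0 : ∀ x, 0 ≤ f x) (hfi : Integrable f) (hf : LCH f)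
    {a b : ℝ} (hab : a < b) (hfa : 0 < f a) (hfb : 0 < f b) :
    ∃ M : ℝ, 0 ≤ M ∧ ∀ x, f x ≤ M := by
  set K : ℝ := (4 * (∫ v, f v) / ((b - a) * min (min (f a) (f b)) 1)) ^ (2:ℝ) with hKdef
  refine ⟨max 1 K, le_max_of_le_left zero_le_one, fun x => ?_⟩
  rcases le_or_gt (f x) 1 with h1 | h1
  · exact h1.trans (le_max_left _ _)
  rcases le_or_gt x ((a + b) / 2) with hx | hx
  · exact (half_bound hf0 hfi hf hab hfa hfb hx h1).trans (le_max_right _ _)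
  · -- reflect
    set F : ℝ → ℝ := fun v => f (-v) with hFdef
    have hF0 : ∀ v, 0 ≤ F v := fun v => hf0 _
    have hFi : Integrable F := hfi.comp_neg
    have hFlc : LCH F := by
      intro p q t ht
      have h := hf (-p) (-q) t ht
      have harg : t * -p + (1 - t) * -q = -(t * p + (1 - t) * q) := by ring
      rw [harg] at h
      exact h
    have hab' : -b < -a := by linarith
    have h := half_bound hF0 hFi hFlc hab' (by simpa [hFdef] using hfb)
      (by simpa [hFdef] using hfa) (x := -x) (by linarith) (by simpa [hFdef] using h1)
    have hIF : (∫ v, F v) = ∫ v, f v := by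
      simpa [hFdef] using integral_neg_eq_self (fun v => f v) volume
    have : F (-x) = f x := by simp [hFdef]
    rw [this] at h
    refine le_trans h (le_trans (le_of_eq ?_) (le_max_right _ _))
    rw [hKdef, hIF]
    have : min (min (F (-b)) (F (-a))) 1 = min (min (f a) (f b)) 1 := by
      simp [hFdef, min_comm (f b) (f a)]
    rw [this]
    ring_nf

lemma BM1 {A B : Set ℝ} (hA : MeasurableSet A) (hB : MeasurableSet B)
    (hAne : A.Nonempty) (hBne : B.Nonempty) :
    volume A + volume B ≤ volume (A + B) := by
  obtain ⟨a, ha⟩ := hAne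
  obtain ⟨b, hb⟩ := hBne
  rcases eq_or_ne (volume A) ⊤ with hAt | hAt
  · have hsub : b +ᵥ A ⊆ A + B := by
      rintro z ⟨x, hx, rfl⟩
      exact ⟨x, hx, b, hb, by simp only [vadd_eq_add]; ring⟩
    have := measure_mono (μ := volume) hsub
    rw [measure_vadd volume] at this
    rw [hAt] at this ⊢
    simp [top_le_iff.1 this]
  rcases eq_or_ne (volume B) ⊤ with hBt | hBt
  · have hsub : a +ᵥ B ⊆ A + B := by
      rintro z ⟨x, hx, rfl⟩
      exact ⟨a, ha, x, hx, by simp only [vadd_eq_add]⟩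
    have := measure_mono (μ := volume) hsub
    rw [measure_vadd volume] at this
    rw [hBt] at this ⊢
    simp [top_le_iff.1 this]
  -- both finite
  refine ENNReal.le_of_forall_pos_le_add fun ε hε _ => ?_
  have hε2 : ((ε:ℝ≥0∞) / 2) ≠ 0 := by
    simp [ENNReal.div_eq_zero_iff, (ENNReal.coe_pos.2 hε).ne']
  obtain ⟨K, hKA, hKc, hKm⟩ := hA.exists_isCompact_lt_add hAt hε2
  obtain ⟨L, hLB, hLc, hLm⟩ := hB.exists_isCompact_lt_add hBt hε2
  set K' : Set ℝ := insert a K with hK'def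
  set L' : Set ℝ := insert b L with hL'def
  have hK'c : IsCompact K' := hKc.insert a
  have hL'c : IsCompact L' := hLc.insert b
  have hK'A : K' ⊆ A := insert_subset ha hKA
  have hL'B : L' ⊆ B := insert_subset hb hLB
  have hK'ne : K'.Nonempty := ⟨a, mem_insert _ _⟩
  have hL'ne : L'.Nonempty := ⟨b, mem_insert _ _⟩
  set α : ℝ := sSup K' with hα
  set β : ℝ := sInf L' with hβ
  have hαK : α ∈ K' := hK'c.sSup_mem hK'ne
  have hβL : β ∈ L' := hL'c.sInf_mem hL'ne
  set S : Set ℝ := β +ᵥ K' with hS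
  set T : Set ℝ := α +ᵥ L' with hT
  have hSsub : S ⊆ A + B := by
    rintro z ⟨x, hx, rfl⟩
    exact ⟨x, hK'A hx, β, hL'B hβL, by simp only [vadd_eq_add]; ring⟩
  have hTsub : T ⊆ A + B := by
    rintro z ⟨x, hx, rfl⟩
    exact ⟨α, hK'A hαK, x, hL'B hx, by simp only [vadd_eq_add]⟩
  have hSm : MeasurableSet S := hK'c.measurableSet.const_vadd β
  have hTm : MeasurableSet T := hL'c.measurableSet.const_vadd α
  have hST : S ∩ T ⊆ {α + β} := by
    rintro z ⟨⟨x, hx, rfl⟩, ⟨y, hy, hyz⟩⟩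
    have h1 : x ≤ α := le_csSup hK'c.bddAbove hx
    have h2 : β ≤ y := csInf_le hL'c.bddBelow hy
    have : α + y = β + x := hyz
    simp only [mem_singleton_iff, vadd_eq_add]
    simp only [vadd_eq_add] at hyz
    linarith
  have hunion : volume (S ∪ T) = volume S + volume T := by
    have h := measure_union_add_inter (μ := volume) S hTm
    have hz : volume (S ∩ T) = 0 :=
      le_antisymm ((measure_mono hST).trans (by simp)) (zero_le)
    rw [hz, add_zero] at h
    exact h
  calc volume A + volume B ≤ (volume K + ε/2) + (volume L + ε/2) :=
        add_le_add hKm.le hLm.le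
    _ ≤ (volume K' + ε/2) + (volume L' + ε/2) :=
        add_le_add (add_le_add (measure_mono (subset_insert _ _)) le_rfl)
          (add_le_add (measure_mono (subset_insert _ _)) le_rfl)
    _ = (volume S + volume T) + (ε/2 + ε/2) := by
        rw [hS, hT, measure_vadd volume, measure_vadd volume]; ring
    _ = volume (S ∪ T) + ε := by rw [hunion, ENNReal.add_halves]
    _ ≤ volume (A + B) + ε :=
        add_le_add (measure_mono (union_subset hSsub hTsub)) le_rfl

lemma amgm2 {t : ℝ} (ht : 0 < t) (ht1 : t < 1) (a b : ℝ≥0∞) :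
    a ^ t * b ^ (1 - t) ≤ ENNReal.ofReal t * a + ENNReal.ofReal (1 - t) * b := by
  have ht' : (0:ℝ) < 1 - t := by linarith
  rcases eq_or_ne a ⊤ with rfl | ha
  · rcases eq_or_ne b 0 with rfl | hb
    · rw [ENNReal.zero_rpow_of_pos ht', mul_zero]; exact zero_le
    · have h1 : ENNReal.ofReal t * ⊤ = ⊤ :=
        ENNReal.mul_top (ENNReal.ofReal_pos.2 ht).ne'
      rw [h1]; simp
  rcases eq_or_ne b ⊤ with rfl | hb
  · have h1 : ENNReal.ofReal (1 - t) * ⊤ = ⊤ :=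
      ENNReal.mul_top (ENNReal.ofReal_pos.2 ht').ne'
    rcases eq_or_ne a 0 with rfl | ha0
    · rw [ENNReal.zero_rpow_of_pos ht, zero_mul]; exact zero_le
    · rw [h1]; simp
  -- finite case
  lift a to ℝ≥0 using ha
  lift b to ℝ≥0 using hb
  have key := NNReal.geom_mean_le_arith_mean2_weighted (w₁ := t.toNNReal)
    (w₂ := (1 - t).toNNReal) (p₁ := a) (p₂ := b) ?_
  rotate_left
  · have : t.toNNReal + (1-t).toNNReal = (1:ℝ).toNNReal := by
      rw [← Real.toNNReal_add ht.le ht'.le]; norm_num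
    rw [this]; simp
  rw [Real.coe_toNNReal t ht.le, Real.coe_toNNReal _ ht'.le] at key
  · calc (a:ℝ≥0∞) ^ t * (b:ℝ≥0∞) ^ (1-t)
        = ((a ^ t * b ^ (1-t) : ℝ≥0) : ℝ≥0∞) := by
          rw [ENNReal.coe_mul, ← ENNReal.coe_rpow_of_nonneg a ht.le,
            ← ENNReal.coe_rpow_of_nonneg b ht'.le]
      _ ≤ ((t.toNNReal * a + (1-t).toNNReal * b : ℝ≥0) : ℝ≥0∞) := ENNReal.coe_le_coe.2 key
      _ = ENNReal.ofReal t * a + ENNReal.ofReal (1-t) * b := by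
          rw [ENNReal.coe_add, ENNReal.coe_mul, ENNReal.coe_mul,
            ENNReal.ofReal, ENNReal.ofReal]

lemma sub1 {φ : ℝ → ℝ≥0∞} (hφ : Measurable φ) {c : ℝ} (S : ℝ) (hc : 0 < c) :
    ∫⁻ u in Set.Ioo 0 S, φ (c * u) = ENNReal.ofReal c⁻¹ * ∫⁻ v in Set.Ioo 0 (c * S), φ v := by
  have hm : Measurable fun u : ℝ => c * u := measurable_id.const_mul c
  have hind : Measurable ((Set.Ioo (0:ℝ) (c*S)).indicator φ) :=
    hφ.indicator measurableSet_Ioo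
  have h2 : ∀ u : ℝ, (Set.Ioo (0:ℝ) S).indicator (fun u => φ (c*u)) u
      = (Set.Ioo (0:ℝ) (c*S)).indicator φ (c*u) := by
    intro u
    by_cases hu : u ∈ Set.Ioo (0:ℝ) S
    · rw [Set.indicator_of_mem hu, Set.indicator_of_mem]
      exact ⟨mul_pos hc hu.1, (mul_lt_mul_iff_right₀ hc).2 hu.2⟩
    · rw [Set.indicator_of_notMem hu, Set.indicator_of_notMem]
      intro hcu
      have hu0 : 0 < u := by
        rcases mul_pos_iff.1 hcu.1 with ⟨_, h⟩ | ⟨h, _⟩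
        · exact h
        · linarith
      exact hu ⟨hu0, (mul_lt_mul_iff_right₀ hc).1 hcu.2⟩
  calc ∫⁻ u in Set.Ioo 0 S, φ (c * u)
      = ∫⁻ u, (Set.Ioo (0:ℝ) S).indicator (fun u => φ (c*u)) u :=
        (lintegral_indicator measurableSet_Ioo _).symm
    _ = ∫⁻ u, (Set.Ioo (0:ℝ) (c*S)).indicator φ (c*u) := by
        congr 1; ext u; exact h2 u
    _ = ∫⁻ v, (Set.Ioo (0:ℝ) (c*S)).indicator φ v ∂(Measure.map (fun u => c*u) volume) :=
        (lintegral_map hind hm).symm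
    _ = ENNReal.ofReal c⁻¹ * ∫⁻ v in Set.Ioo 0 (c*S), φ v := by
        rw [Real.map_volume_mul_left hc.ne', lintegral_smul_measure,
          lintegral_indicator measurableSet_Ioo, abs_of_pos (inv_pos.2 hc), smul_eq_mul]

lemma PL_bdd {t : ℝ} (ht : 0 < t) (ht1 : t < 1) {F G H : ℝ → ℝ}
    (hF0 : ∀ x, 0 ≤ F x) (hG0 : ∀ x, 0 ≤ G x) (hH0 : ∀ x, 0 ≤ H x)
    (hFm : Measurable F) (hGm : Measurable G) (hHm : Measurable H)
    {MF MG : ℝ} (hMF : ∀ x, F x ≤ MF) (hMG : ∀ x, G x ≤ MG)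
    (hFGH : ∀ a b : ℝ, F a ^ t * G b ^ (1-t) ≤ H (t * a + (1-t) * b)) :
    (∫⁻ v, ENNReal.ofReal (F v)) ^ t * (∫⁻ v, ENNReal.ofReal (G v)) ^ (1-t)
      ≤ ∫⁻ v, ENNReal.ofReal (H v) := by
  have ht' : (0:ℝ) < 1 - t := by linarith
  set SF := sSup (Set.range F) with hSFdef
  set SG := sSup (Set.range G) with hSGdef
  have hbF : BddAbove (Set.range F) := ⟨MF, by rintro _ ⟨x, rfl⟩; exact hMF x⟩
  have hbG : BddAbove (Set.range G) := ⟨MG, by rintro _ ⟨x, rfl⟩; exact hMG x⟩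
  have hFle : ∀ x, F x ≤ SF := fun x => le_csSup hbF ⟨x, rfl⟩
  have hGle : ∀ x, G x ≤ SG := fun x => le_csSup hbG ⟨x, rfl⟩
  have hSF0 : 0 ≤ SF := (hF0 0).trans (hFle 0)
  have hSG0 : 0 ≤ SG := (hG0 0).trans (hGle 0)
  rcases hSF0.eq_or_lt with hSF | hSF
  · have hz : ∀ v, ENNReal.ofReal (F v) = 0 := fun v =>
      ENNReal.ofReal_eq_zero.2 ((hFle v).trans hSF.ge)
    rw [show (∫⁻ v, ENNReal.ofReal (F v)) = 0 by simp [hz],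
      ENNReal.zero_rpow_of_pos ht, zero_mul]
    exact zero_le
  rcases hSG0.eq_or_lt with hSG | hSG
  · have hz : ∀ v, ENNReal.ofReal (G v) = 0 := fun v =>
      ENNReal.ofReal_eq_zero.2 ((hGle v).trans hSG.ge)
    rw [show (∫⁻ v, ENNReal.ofReal (G v)) = 0 by simp [hz],
      ENNReal.zero_rpow_of_pos ht', mul_zero]
    exact zero_le
  -- main case
  set S := SF ^ t * SG ^ (1-t) with hSdef
  have hS0 : 0 < S := mul_pos (Real.rpow_pos_of_pos hSF t) (Real.rpow_pos_of_pos hSG _)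
  set φF := fun u : ℝ => volume {v : ℝ | u < F v} with hφFdef
  set φG := fun u : ℝ => volume {v : ℝ | u < G v} with hφGdef
  set φH := fun u : ℝ => volume {v : ℝ | u < H v} with hφHdef
  have hφF : Measurable φF := Antitone.measurable fun u u' h =>
    measure_mono fun v hv => lt_of_le_of_lt h hv
  have hφG : Measurable φG := Antitone.measurable fun u u' h =>
    measure_mono fun v hv => lt_of_le_of_lt h hv
  have hφH : Measurable φH := Antitone.measurable fun u u' h =>
    measure_mono fun v hv => lt_of_le_of_lt h hv
  have hA : (∫⁻ v, ENNReal.ofReal (F v)) = ∫⁻ u in Set.Ioi 0, φF u :=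
    lintegral_eq_lintegral_meas_lt volume (Filter.Eventually.of_forall hF0) hFm.aemeasurable
  have hB : (∫⁻ v, ENNReal.ofReal (G v)) = ∫⁻ u in Set.Ioi 0, φG u :=
    lintegral_eq_lintegral_meas_lt volume (Filter.Eventually.of_forall hG0) hGm.aemeasurable
  have hC : (∫⁻ v, ENNReal.ofReal (H v)) = ∫⁻ u in Set.Ioi 0, φH u :=
    lintegral_eq_lintegral_meas_lt volume (Filter.Eventually.of_forall hH0) hHm.aemeasurable
  -- key pointwise estimate
  have key : ∀ u ∈ Set.Ioo 0 S,
      ENNReal.ofReal t * φF (SF/S * u) + ENNReal.ofReal (1-t) * φG (SG/S * u) ≤ φH u := by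
    intro u hu
    set w := u / S with hwdef
    have hw0 : 0 < w := div_pos hu.1 hS0
    have hw1 : w < 1 := (div_lt_one hS0).2 hu.2
    have hFW : SF/S * u = SF * w := by rw [hwdef]; ring
    have hGW : SG/S * u = SG * w := by rw [hwdef]; ring
    set AS := {v : ℝ | SF * w < F v} with hASdef
    set BS := {v : ℝ | SG * w < G v} with hBSdef
    have hASm : MeasurableSet AS := hFm measurableSet_Ioi
    have hBSm : MeasurableSet BS := hGm measurableSet_Ioi
    have hASne : AS.Nonempty := by
      have : SF * w < SF := by nlinarith
      obtain ⟨_, ⟨v, rfl⟩, hv⟩ := exists_lt_of_lt_csSup (Set.range_nonempty F) this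
      exact ⟨v, hv⟩
    have hBSne : BS.Nonempty := by
      have : SG * w < SG := by nlinarith
      obtain ⟨_, ⟨v, rfl⟩, hv⟩ := exists_lt_of_lt_csSup (Set.range_nonempty G) this
      exact ⟨v, hv⟩
    have hueq : u = S * w := by rw [hwdef]; field_simp
    have hsub : t • AS + (1-t) • BS ⊆ {v : ℝ | u < H v} := by
      rintro z ⟨p, hp, q, hq, rfl⟩
      obtain ⟨aa, haa, rfl⟩ := hp
      obtain ⟨bb, hbb, rfl⟩ := hq
      simp only [smul_eq_mul, Set.mem_setOf_eq]
      have h1 : (SF * w) ^ t < F aa ^ t :=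
        Real.rpow_lt_rpow (mul_nonneg hSF0 hw0.le) haa ht
      have h2 : (SG * w) ^ (1-t) < G bb ^ (1-t) :=
        Real.rpow_lt_rpow (mul_nonneg hSG0 hw0.le) hbb ht'
      have h3 : (SF * w) ^ t * ((SG * w) ^ (1-t)) = S * w := by
        rw [Real.mul_rpow hSF0 hw0.le, Real.mul_rpow hSG0 hw0.le, hSdef]
        have : w ^ t * w ^ (1-t) = w := by
          rw [← Real.rpow_add hw0, add_sub_cancel, Real.rpow_one]
        nlinarith [this]
      calc u = S * w := hueq
        _ = (SF * w) ^ t * ((SG * w) ^ (1-t)) := h3.symm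
        _ < F aa ^ t * G bb ^ (1-t) := by
            apply mul_lt_mul'' h1 h2 (Real.rpow_nonneg (mul_nonneg hSF0 hw0.le) _)
              (Real.rpow_nonneg (mul_nonneg hSG0 hw0.le) _)
        _ ≤ H (t * aa + (1-t) * bb) := hFGH aa bb
    have hsmulA : volume (t • AS) = ENNReal.ofReal t * volume AS := by
      rw [Measure.addHaar_smul volume t AS]
      congr 1
      rw [Module.finrank_self, pow_one, abs_of_pos ht]
    have hsmulB : volume ((1-t) • BS) = ENNReal.ofReal (1-t) * volume BS := by
      rw [Measure.addHaar_smul volume (1-t) BS]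
      congr 1
      rw [Module.finrank_self, pow_one, abs_of_pos ht']
    calc ENNReal.ofReal t * φF (SF/S * u) + ENNReal.ofReal (1-t) * φG (SG/S * u)
        = volume (t • AS) + volume ((1-t) • BS) := by
          rw [hsmulA, hsmulB, hφFdef, hφGdef, hFW, hGW]
      _ ≤ volume (t • AS + (1-t) • BS) :=
          BM1 (hASm.const_smul₀ t) (hBSm.const_smul₀ (1-t))
            (hASne.smul_set) (hBSne.smul_set)
      _ ≤ φH u := measure_mono hsub
  -- integrate the key estimate
  have hmono1 : Measurable fun u => φF (SF/S * u) := hφF.comp (measurable_id.const_mul _)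
  have hmono2 : Measurable fun u => φG (SG/S * u) := hφG.comp (measurable_id.const_mul _)
  have step1 : ∫⁻ u in Set.Ioo 0 S,
      (ENNReal.ofReal t * φF (SF/S * u) + ENNReal.ofReal (1-t) * φG (SG/S * u))
      ≤ ∫⁻ v, ENNReal.ofReal (H v) := by
    rw [hC]
    calc ∫⁻ u in Set.Ioo 0 S,
        (ENNReal.ofReal t * φF (SF/S * u) + ENNReal.ofReal (1-t) * φG (SG/S * u))
        ≤ ∫⁻ u in Set.Ioo 0 S, φH u := setLIntegral_mono hφH key
      _ ≤ ∫⁻ u in Set.Ioi 0, φH u := lintegral_mono_set Set.Ioo_subset_Ioi_self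
  have hcF : 0 < SF / S := div_pos hSF hS0
  have hcG : 0 < SG / S := div_pos hSG hS0
  have tailF : ∫⁻ u in Set.Ioo 0 SF, φF u = ∫⁻ u in Set.Ioi 0, φF u := by
    have hsplit : Set.Ioi (0:ℝ) = Set.Ioo 0 SF ∪ Set.Ici SF := by
      ext u; constructor
      · intro hu; rcases lt_or_ge u SF with h | h
        · exact Or.inl ⟨hu, h⟩
        · exact Or.inr h
      · rintro (⟨h, _⟩ | h)
        · exact h
        · exact lt_of_lt_of_le hSF h
    have hdisj : Disjoint (Set.Ioo (0:ℝ) SF) (Set.Ici SF) := by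
      apply Set.disjoint_left.2
      rintro u ⟨_, h2⟩ h3
      exact absurd h3 (not_le.2 h2)
    have hzero : ∫⁻ u in Set.Ici SF, φF u = 0 := by
      have : ∀ u ∈ Set.Ici SF, φF u = 0 := by
        intro u hu
        rw [hφFdef]
        convert measure_empty
        · ext v; simp only [Set.mem_setOf_eq, Set.mem_empty_iff_false, iff_false, not_lt]
          exact (hFle v).trans hu
        · infer_instance
      calc ∫⁻ u in Set.Ici SF, φF u = ∫⁻ _ in Set.Ici SF, 0 :=
            setLIntegral_congr_fun measurableSet_Ici this
        _ = 0 := lintegral_zero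
    rw [hsplit, lintegral_union measurableSet_Ici hdisj, hzero, add_zero]
  have tailG : ∫⁻ u in Set.Ioo 0 SG, φG u = ∫⁻ u in Set.Ioi 0, φG u := by
    have hsplit : Set.Ioi (0:ℝ) = Set.Ioo 0 SG ∪ Set.Ici SG := by
      ext u; constructor
      · intro hu; rcases lt_or_ge u SG with h | h
        · exact Or.inl ⟨hu, h⟩
        · exact Or.inr h
      · rintro (⟨h, _⟩ | h)
        · exact h
        · exact lt_of_lt_of_le hSG h
    have hdisj : Disjoint (Set.Ioo (0:ℝ) SG) (Set.Ici SG) := by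
      apply Set.disjoint_left.2
      rintro u ⟨_, h2⟩ h3
      exact absurd h3 (not_le.2 h2)
    have hzero : ∫⁻ u in Set.Ici SG, φG u = 0 := by
      have : ∀ u ∈ Set.Ici SG, φG u = 0 := by
        intro u hu
        rw [hφGdef]
        convert measure_empty
        · ext v; simp only [Set.mem_setOf_eq, Set.mem_empty_iff_false, iff_false, not_lt]
          exact (hGle v).trans hu
        · infer_instance
      calc ∫⁻ u in Set.Ici SG, φG u = ∫⁻ _ in Set.Ici SG, 0 :=
            setLIntegral_congr_fun measurableSet_Ici this
        _ = 0 := lintegral_zero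
    rw [hsplit, lintegral_union measurableSet_Ici hdisj, hzero, add_zero]
  have subF : ∫⁻ u in Set.Ioo 0 S, φF (SF/S * u)
      = ENNReal.ofReal (S/SF) * ∫⁻ u in Set.Ioi 0, φF u := by
    rw [sub1 hφF S hcF]
    have h1 : SF / S * S = SF := by field_simp
    rw [h1, inv_div, tailF]
  have subG : ∫⁻ u in Set.Ioo 0 S, φG (SG/S * u)
      = ENNReal.ofReal (S/SG) * ∫⁻ u in Set.Ioi 0, φG u := by
    rw [sub1 hφG S hcG]
    have h1 : SG / S * S = SG := by field_simp
    rw [h1, inv_div, tailG]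
  -- put together
  set A' := ∫⁻ v, ENNReal.ofReal (F v) with hA'def
  set B' := ∫⁻ v, ENNReal.ofReal (G v) with hB'def
  set SF' := ENNReal.ofReal SF with hSF'def
  set SG' := ENNReal.ofReal SG with hSG'def
  have hSF'0 : SF' ≠ 0 := (ENNReal.ofReal_pos.2 hSF).ne'
  have hSG'0 : SG' ≠ 0 := (ENNReal.ofReal_pos.2 hSG).ne'
  have hSF't : SF' ≠ ⊤ := ENNReal.ofReal_ne_top
  have hSG't : SG' ≠ ⊤ := ENNReal.ofReal_ne_top
  have hSeq : ENNReal.ofReal S = SF' ^ t * SG' ^ (1-t) := by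
    rw [hSdef, ENNReal.ofReal_mul (Real.rpow_nonneg hSF0 _), hSF'def, hSG'def,
      ENNReal.ofReal_rpow_of_pos hSF, ENNReal.ofReal_rpow_of_pos hSG]
  have expand : (∫⁻ u in Set.Ioo 0 S,
      (ENNReal.ofReal t * φF (SF/S * u) + ENNReal.ofReal (1-t) * φG (SG/S * u)))
      = ENNReal.ofReal t * (ENNReal.ofReal (S/SF) * A')
        + ENNReal.ofReal (1-t) * (ENNReal.ofReal (S/SG) * B') := by
    rw [lintegral_add_left (hmono1.const_mul _), lintegral_const_mul _ hmono1,
      lintegral_const_mul _ hmono2, subF, subG, ← hA, ← hB]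
  have hA'eq : A' = A' / SF' * SF' := (ENNReal.div_mul_cancel hSF'0 hSF't).symm
  have hB'eq : B' = B' / SG' * SG' := (ENNReal.div_mul_cancel hSG'0 hSG't).symm
  calc A' ^ t * B' ^ (1-t)
      = (A'/SF' * SF') ^ t * ((B'/SG' * SG') ^ (1-t)) := by
        conv_lhs => rw [hA'eq, hB'eq]
    _ = (SF' ^ t * SG' ^ (1-t)) * ((A'/SF') ^ t * (B'/SG') ^ (1-t)) := by
        rw [ENNReal.mul_rpow_of_nonneg _ _ ht.le, ENNReal.mul_rpow_of_nonneg _ _ ht'.le]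
        ring
    _ = ENNReal.ofReal S * ((A'/SF') ^ t * (B'/SG') ^ (1-t)) := by rw [hSeq]
    _ ≤ ENNReal.ofReal S * (ENNReal.ofReal t * (A'/SF') + ENNReal.ofReal (1-t) * (B'/SG')) :=
        mul_le_mul_right (amgm2 ht ht1 _ _) _
    _ = ENNReal.ofReal t * (ENNReal.ofReal (S/SF) * A')
        + ENNReal.ofReal (1-t) * (ENNReal.ofReal (S/SG) * B') := by
        rw [ENNReal.ofReal_div_of_pos hSF, ENNReal.ofReal_div_of_pos hSG, mul_add,
          ← hSF'def, ← hSG'def]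
        rw [div_eq_mul_inv A' SF', div_eq_mul_inv B' SG',
          div_eq_mul_inv (ENNReal.ofReal S) SF', div_eq_mul_inv (ENNReal.ofReal S) SG']
        ring
    _ = ∫⁻ u in Set.Ioo 0 S,
        (ENNReal.ofReal t * φF (SF/S * u) + ENNReal.ofReal (1-t) * φG (SG/S * u)) := expand.symm
    _ ≤ ∫⁻ v, ENNReal.ofReal (H v) := step1

lemma rpow_iSup_le {a : ℕ → ℝ≥0∞} {t : ℝ} (ht : 0 < t) :
    (⨆ n, a n) ^ t ≤ ⨆ n, a n ^ t := by
  have h1 : ∀ n, a n ≤ (⨆ n, a n ^ t) ^ t⁻¹ := fun n => by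
    calc a n = (a n ^ t) ^ t⁻¹ := by
          rw [← ENNReal.rpow_mul, mul_inv_cancel₀ ht.ne', ENNReal.rpow_one]
      _ ≤ (⨆ n, a n ^ t) ^ t⁻¹ :=
          ENNReal.rpow_le_rpow (le_iSup (fun n => a n ^ t) n) (inv_nonneg.2 ht.le)
  calc (⨆ n, a n) ^ t ≤ ((⨆ n, a n ^ t) ^ t⁻¹) ^ t :=
        ENNReal.rpow_le_rpow (iSup_le h1) ht.le
    _ = ⨆ n, a n ^ t := by
        rw [← ENNReal.rpow_mul, inv_mul_cancel₀ ht.ne', ENNReal.rpow_one]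

lemma PL {t : ℝ} (ht : 0 < t) (ht1 : t < 1) {F G H : ℝ → ℝ}
    (hF0 : ∀ x, 0 ≤ F x) (hG0 : ∀ x, 0 ≤ G x) (hH0 : ∀ x, 0 ≤ H x)
    (hFm : Measurable F) (hGm : Measurable G) (hHm : Measurable H)
    (hFGH : ∀ a b : ℝ, F a ^ t * G b ^ (1-t) ≤ H (t * a + (1-t) * b)) :
    (∫⁻ v, ENNReal.ofReal (F v)) ^ t * (∫⁻ v, ENNReal.ofReal (G v)) ^ (1-t)
      ≤ ∫⁻ v, ENNReal.ofReal (H v) := by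
  have ht' : (0:ℝ) < 1 - t := by linarith
  set Fn : ℕ → ℝ → ℝ := fun n v => min (F v) n with hFndef
  set Gn : ℕ → ℝ → ℝ := fun n v => min (G v) n with hGndef
  have hFn0 : ∀ n v, 0 ≤ Fn n v := fun n v => le_min (hF0 v) (Nat.cast_nonneg n)
  have hGn0 : ∀ n v, 0 ≤ Gn n v := fun n v => le_min (hG0 v) (Nat.cast_nonneg n)
  have hFnm : ∀ n, Measurable (Fn n) := fun n => hFm.min measurable_const
  have hGnm : ∀ n, Measurable (Gn n) := fun n => hGm.min measurable_const
  have hFnle : ∀ n v, Fn n v ≤ (n:ℝ) := fun n v => min_le_right _ _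
  have hGnle : ∀ n v, Gn n v ≤ (n:ℝ) := fun n v => min_le_right _ _
  have hkey : ∀ n m : ℕ, ∀ a b : ℝ, Fn n a ^ t * Gn m b ^ (1-t) ≤ H (t * a + (1-t) * b) := by
    intro n m a b
    calc Fn n a ^ t * Gn m b ^ (1-t) ≤ F a ^ t * G b ^ (1-t) := by
          apply mul_le_mul (Real.rpow_le_rpow (hFn0 n a) (min_le_left _ _) ht.le)
            (Real.rpow_le_rpow (hGn0 m b) (min_le_left _ _) ht'.le)
            (Real.rpow_nonneg (hGn0 m b) _) (Real.rpow_nonneg (hF0 a) _)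
      _ ≤ H (t * a + (1-t) * b) := hFGH a b
  set An : ℕ → ℝ≥0∞ := fun n => ∫⁻ v, ENNReal.ofReal (Fn n v) with hAndef
  set Bn : ℕ → ℝ≥0∞ := fun n => ∫⁻ v, ENNReal.ofReal (Gn n v) with hBndef
  have hofmono : ∀ {X : ℝ → ℝ}, (∀ v, 0 ≤ X v) →
      (∀ v, ⨆ n : ℕ, ENNReal.ofReal (min (X v) n) = ENNReal.ofReal (X v)) := by
    intro X hX v
    apply le_antisymm
    · exact iSup_le fun n => ENNReal.ofReal_le_ofReal (min_le_left _ _)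
    · refine le_iSup_of_le ⌈X v⌉₊ (ENNReal.ofReal_le_ofReal ?_)
      exact le_min le_rfl (Nat.le_ceil _)
  have hAsup : (⨆ n, An n) = ∫⁻ v, ENNReal.ofReal (F v) := by
    rw [hAndef]
    rw [← lintegral_iSup (fun n => (hFnm n).ennreal_ofReal)
      (fun n m hnm v => ENNReal.ofReal_le_ofReal
        (min_le_min le_rfl (Nat.cast_le.2 hnm)))]
    exact lintegral_congr fun v => hofmono hF0 v
  have hBsup : (⨆ n, Bn n) = ∫⁻ v, ENNReal.ofReal (G v) := by
    rw [hBndef]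
    rw [← lintegral_iSup (fun n => (hGnm n).ennreal_ofReal)
      (fun n m hnm v => ENNReal.ofReal_le_ofReal
        (min_le_min le_rfl (Nat.cast_le.2 hnm)))]
    exact lintegral_congr fun v => hofmono hG0 v
  have hnm : ∀ n m : ℕ, An n ^ t * Bn m ^ (1-t) ≤ ∫⁻ v, ENNReal.ofReal (H v) := by
    intro n m
    exact PL_bdd ht ht1 (hFn0 n) (hGn0 m) hH0 (hFnm n) (hGnm m) hHm
      (hFnle n) (hGnle m) (hkey n m)
  calc (∫⁻ v, ENNReal.ofReal (F v)) ^ t * (∫⁻ v, ENNReal.ofReal (G v)) ^ (1-t)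
      = (⨆ n, An n) ^ t * (⨆ m, Bn m) ^ (1-t) := by rw [hAsup, hBsup]
    _ ≤ (⨆ n, An n ^ t) * (⨆ m, Bn m ^ (1-t)) :=
        mul_le_mul' (rpow_iSup_le ht) (rpow_iSup_le ht')
    _ = ⨆ n, ⨆ m, An n ^ t * Bn m ^ (1-t) := by
        rw [ENNReal.iSup_mul]
        exact iSup_congr fun n => ENNReal.mul_iSup _ _
    _ ≤ ∫⁻ v, ENNReal.ofReal (H v) := iSup_le fun n => iSup_le fun m => hnm n m

theorem stmt2 (f g : ℝ → ℝ)
    (hf0 : ∀ x, 0 ≤ f x) (hg0 : ∀ x, 0 ≤ g x)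
    (hfi : Integrable f) (hgi : Integrable g)
    (hf : ∀ x y : ℝ, ∀ t ∈ Set.Icc (0:ℝ) 1,
      f x ^ t * f y ^ (1 - t) ≤ f (t * x + (1 - t) * y))
    (hg : ∀ x y : ℝ, ∀ t ∈ Set.Icc (0:ℝ) 1,
      g x ^ t * g y ^ (1 - t) ≤ g (t * x + (1 - t) * y)) :
    ∀ x y : ℝ, ∀ t ∈ Set.Icc (0:ℝ) 1,
      (∫ v, f (x - v) * g v) ^ t * (∫ v, f (y - v) * g v) ^ (1 - t)
        ≤ ∫ v, f ((t * x + (1 - t) * y) - v) * g v := by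
  intro x y t ht
  obtain ⟨ht0, ht1'⟩ := ht
  rcases ht0.eq_or_lt with rfl | htpos
  · norm_num
  rcases ht1'.eq_or_lt with rfl | ht1
  · norm_num
  -- 0 < t < 1
  have hfm : Measurable f := lch_measurable hf0 hf
  have hgm : Measurable g := lch_measurable hg0 hg
  set z := t * x + (1 - t) * y with hzdef
  have hmeas : ∀ w : ℝ, Measurable fun v => f (w - v) * g v := fun w =>
    ((hfm.comp (measurable_const.sub measurable_id)).mul hgm)
  have hnn : ∀ w v : ℝ, 0 ≤ f (w - v) * g v := fun w v =>
    mul_nonneg (hf0 _) (hg0 _)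
  by_cases hfd : ∃ p q : ℝ, p < q ∧ 0 < f p ∧ 0 < f q
  swap
  · -- f is a.e. zero
    have hsub : {v : ℝ | 0 < f v}.Subsingleton := by
      intro p hp q hq
      by_contra hne
      rcases lt_or_gt_of_ne hne with h | h
      · exact hfd ⟨p, q, h, hp, hq⟩
      · exact hfd ⟨q, p, h, hq, hp⟩
    have hzero : ∀ w : ℝ, (∫ v, f (w - v) * g v) = 0 := by
      intro w
      apply integral_eq_zero_of_ae
      rw [Filter.eventuallyEq_iff_exists_mem]
      refine ⟨{v : ℝ | f (w - v) * g v = 0}, ?_, fun v hv => hv⟩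
      rw [mem_ae_iff]
      have hss : {v : ℝ | f (w - v) * g v = 0}ᶜ ⊆ (fun v => w - v) ⁻¹' {u | 0 < f u} := by
        intro v hv
        simp only [Set.mem_compl_iff, Set.mem_setOf_eq] at hv
        have hfv : f (w - v) ≠ 0 := fun h => hv (by rw [h, zero_mul])
        exact lt_of_le_of_ne (hf0 _) (Ne.symm hfv)
      refine measure_mono_null hss ?_
      have : ((fun v : ℝ => w - v) ⁻¹' {u | 0 < f u}).Subsingleton :=
        hsub.preimage (fun v v' hvv' => by
          have : w - v = w - v' := hvv'
          linarith)
      exact this.measure_zero _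
    rw [hzero x, hzero y, hzero z, Real.zero_rpow htpos.ne', zero_mul]
  by_cases hgd : ∃ p q : ℝ, p < q ∧ 0 < g p ∧ 0 < g q
  swap
  · have hsub : {v : ℝ | 0 < g v}.Subsingleton := by
      intro p hp q hq
      by_contra hne
      rcases lt_or_gt_of_ne hne with h | h
      · exact hgd ⟨p, q, h, hp, hq⟩
      · exact hgd ⟨q, p, h, hq, hp⟩
    have hzero : ∀ w : ℝ, (∫ v, f (w - v) * g v) = 0 := by
      intro w
      apply integral_eq_zero_of_ae
      rw [Filter.eventuallyEq_iff_exists_mem]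
      refine ⟨{v : ℝ | f (w - v) * g v = 0}, ?_, fun v hv => hv⟩
      rw [mem_ae_iff]
      have hss : {v : ℝ | f (w - v) * g v = 0}ᶜ ⊆ {u | 0 < g u} := by
        intro v hv
        simp only [Set.mem_compl_iff, Set.mem_setOf_eq] at hv
        have hgv : g v ≠ 0 := fun h => hv (by rw [h, mul_zero])
        exact lt_of_le_of_ne (hg0 _) (Ne.symm hgv)
      exact measure_mono_null hss (hsub.measure_zero _)
    rw [hzero x, hzero y, hzero z, Real.zero_rpow htpos.ne', zero_mul]
  obtain ⟨p, q, hpq, hfp, hfq⟩ := hfd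
  obtain ⟨Mf, hMf0, hMf⟩ := lch_bounded hf0 hfi hf hpq hfp hfq
  set F : ℝ → ℝ := fun v => f (x - v) * g v with hFdef
  set G : ℝ → ℝ := fun v => f (y - v) * g v with hGdef
  set Hh : ℝ → ℝ := fun v => f (z - v) * g v with hHdef
  have hicc : t ∈ Set.Icc (0:ℝ) 1 := ⟨htpos.le, ht1.le⟩
  have hFGH : ∀ a b : ℝ, F a ^ t * G b ^ (1-t) ≤ Hh (t * a + (1-t) * b) := by
    intro a b
    have h1 := hf (x-a) (y-b) t hicc
    have h2 := hg a b t hicc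
    have harg : t * (x-a) + (1-t) * (y-b) = z - (t * a + (1-t) * b) := by rw [hzdef]; ring
    calc F a ^ t * G b ^ (1-t)
        = (f (x-a) ^ t * f (y-b) ^ (1-t)) * (g a ^ t * g b ^ (1-t)) := by
          rw [hFdef, hGdef]
          dsimp only
          rw [Real.mul_rpow (hf0 _) (hg0 _), Real.mul_rpow (hf0 _) (hg0 _)]
          ring
      _ ≤ f (t * (x-a) + (1-t) * (y-b)) * g (t * a + (1-t) * b) :=
          mul_le_mul h1 h2
            (mul_nonneg (Real.rpow_nonneg (hg0 _) _) (Real.rpow_nonneg (hg0 _) _)) (hf0 _)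
      _ = Hh (t * a + (1-t) * b) := by rw [hHdef]; dsimp only; rw [harg]
  have hbound : ∀ w : ℝ, Integrable fun v => f (w - v) * g v := by
    intro w
    apply Integrable.mono' (hgi.const_mul Mf) (hmeas w).aestronglyMeasurable
    apply Filter.Eventually.of_forall
    intro v
    rw [Real.norm_eq_abs, abs_of_nonneg (hnn w v)]
    exact mul_le_mul_of_nonneg_right (hMf _) (hg0 v)
  have hPL := PL htpos ht1 (fun v => hnn x v) (fun v => hnn y v) (fun v => hnn z v)
    (hmeas x) (hmeas y) (hmeas z) hFGH
  have conv : ∀ w : ℝ, (∫ v, f (w - v) * g v)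
      = (∫⁻ v, ENNReal.ofReal (f (w - v) * g v)).toReal := fun w =>
    integral_eq_lintegral_of_nonneg_ae (Filter.Eventually.of_forall (hnn w))
      (hmeas w).aestronglyMeasurable
  have hCt : (∫⁻ v, ENNReal.ofReal (f (z - v) * g v)) ≠ ⊤ := (hbound z).lintegral_lt_top.ne
  show (∫ v, F v) ^ t * (∫ v, G v) ^ (1 - t) ≤ ∫ v, Hh v
  rw [hFdef, hGdef, hHdef]
  dsimp only
  rw [conv x, conv y, conv z]
  calc (∫⁻ v, ENNReal.ofReal (f (x - v) * g v)).toReal ^ t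
        * (∫⁻ v, ENNReal.ofReal (f (y - v) * g v)).toReal ^ (1 - t)
      = ((∫⁻ v, ENNReal.ofReal (f (x - v) * g v)) ^ t
        * (∫⁻ v, ENNReal.ofReal (f (y - v) * g v)) ^ (1 - t)).toReal := by
        rw [ENNReal.toReal_rpow, ENNReal.toReal_rpow, ← ENNReal.toReal_mul]
    _ ≤ (∫⁻ v, ENNReal.ofReal (f (z - v) * g v)).toReal := ENNReal.toReal_mono hCt hPL
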